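/- Let q(x) = 1 − 2x² on [-1,1]. The scaling function s_q of q exists on the dual Cantor set C*, and s_q(a*) = 1/2 for every a* in B, while s_q(a*) ≠ 1/2 for every a* in A. -/

import Mathlib

open Set MeasureTheory Filter Topology

noncomputable def len (s : Set ℝ) : ℝ := (volume s).toReal

noncomputable def branch (f : ℝ → ℝ) : Bool → ℝ → ℝ
  | false => Function.invFunOn f (Icc (-1) 0)
  | true => Function.invFunOn f (Icc 0 1)

noncomputable def gw (f : ℝ → ℝ) : List Bool → ℝ → ℝ
  | [] => id
  | b :: w => branch f b ∘ gw f w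

noncomputable def Iw (f : ℝ → ℝ) (w : List Bool) : Set ℝ := gw f w '' Icc (-1) 1

def word (a : ℕ → Bool) (n : ℕ) : List Bool := ((List.range (n + 1)).reverse).map a

noncomputable def ratio (f : ℝ → ℝ) (a : ℕ → Bool) (n : ℕ) : ℝ :=
  len (Iw f (word a n)) / len (Iw f ((word a n).dropLast))

def IsScalingFun (f : ℝ → ℝ) (s : (ℕ → Bool) → ℝ) : Prop :=
  ∀ a : ℕ → Bool, Tendsto (ratio f a) atTop (nhds (s a))

def HolderOnDual (s : (ℕ → Bool) → ℝ) : Prop :=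
  ∃ C > (0:ℝ), ∃ lam ∈ Ioo (0:ℝ) 1, ∀ a b : ℕ → Bool, ∀ n : ℕ,
    (∀ k < n, a k = b k) → |s a - s b| ≤ C * lam ^ n

def EvZero (a : ℕ → Bool) : Prop := ∃ N, ∀ n ≥ N, a n = false

def Lambda (f : ℝ → ℝ) : Set ℝ := {x | ∀ n : ℕ, f^[n] x ∈ Icc (-1) 1}

structure GoodFamily where
  eps0 : ℝ
  eps0_pos : 0 < eps0
  f : ℝ → ℝ → ℝ
  f' : ℝ → ℝ → ℝ
  gamma : ℝ
  one_lt_gamma : 1 < gamma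
  mono : ∀ ε ∈ Icc 0 eps0, StrictMonoOn (f ε) (Icc (-1) 0)
  anti : ∀ ε ∈ Icc 0 eps0, StrictAntiOn (f ε) (Icc 0 1)
  map_neg_one : ∀ ε ∈ Icc 0 eps0, f ε (-1) = -1
  map_one : ∀ ε ∈ Icc 0 eps0, f ε 1 = -1
  map_zero : ∀ ε ∈ Icc 0 eps0, f ε 0 = 1 + ε
  smooth : ContDiffOn ℝ 1 (fun p : ℝ × ℝ => f p.1 p.2) (Icc 0 eps0 ×ˢ Icc (-1) 1)
  deriv_f : ∀ ε ∈ Icc 0 eps0, ∀ x ∈ Icc (-1:ℝ) 1,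
    HasDerivWithinAt (f ε) (f' ε x) (Icc (-1) 1) x
  Rneg : ℝ → ℝ → ℝ
  Rpos : ℝ → ℝ → ℝ
  Rneg_cont : ContinuousOn (fun p : ℝ × ℝ => Rneg p.1 p.2) (Icc 0 eps0 ×ˢ Icc (-1) 0)
  Rpos_cont : ContinuousOn (fun p : ℝ × ℝ => Rpos p.1 p.2) (Icc 0 eps0 ×ˢ Icc 0 1)
  Rneg_ne : ∀ ε ∈ Icc 0 eps0, ∀ x ∈ Icc (-1:ℝ) 0, Rneg ε x ≠ 0
  Rpos_ne : ∀ ε ∈ Icc 0 eps0, ∀ x ∈ Icc (0:ℝ) 1, Rpos ε x ≠ 0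
  Rneg_eq : ∀ ε ∈ Icc 0 eps0, ∀ x ∈ Ico (-1:ℝ) 0, Rneg ε x = f' ε x / |x| ^ (gamma - 1)
  Rpos_eq : ∀ ε ∈ Icc 0 eps0, ∀ x ∈ Ioc (0:ℝ) 1, Rpos ε x = f' ε x / |x| ^ (gamma - 1)
  K' : ℝ
  K'_pos : 0 < K'
  alpha' : ℝ
  alpha'_mem : alpha' ∈ Ioc (0:ℝ) 1
  holder' : ∀ ε ∈ Icc 0 eps0, ∀ x ∈ Icc (-1:ℝ) 1, ∀ y ∈ Icc (-1:ℝ) 1,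
    |f' ε x - f' ε y| ≤ K' * |x - y| ^ alpha'
  K'' : ℝ
  K''_pos : 0 < K''
  alpha'' : ℝ
  alpha''_mem : alpha'' ∈ Ioc (0:ℝ) 1
  holder''_neg : ∀ ε ∈ Icc 0 eps0, ∀ x ∈ Ico (-1:ℝ) 0, ∀ y ∈ Ico (-1:ℝ) 0,
    |f' ε x / |x| ^ (gamma - 1) - f' ε y / |y| ^ (gamma - 1)| ≤ K'' * |x - y| ^ alpha''
  holder''_pos : ∀ ε ∈ Icc 0 eps0, ∀ x ∈ Ioc (0:ℝ) 1, ∀ y ∈ Ioc (0:ℝ) 1,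
    |f' ε x / |x| ^ (gamma - 1) - f' ε y / |y| ^ (gamma - 1)| ≤ K'' * |x - y| ^ alpha''
  C0 : ℝ
  C0_pos : 0 < C0
  lam : ℝ
  lam_mem : lam ∈ Ioo (0:ℝ) 1
  decay : ∀ ε ∈ Icc 0 eps0, ∀ n : ℕ, 1 ≤ n → ∀ w : List Bool, w.length = n + 1 →
    len (Iw (f ε) w) ≤ C0 * lam ^ n

/-- The Ulam–von Neumann map `q(x) = 1 - 2x²`. -/
noncomputable def q : ℝ → ℝ := fun x => 1 - 2 * x ^ 2

open Real in
noncomputable def hh (u : ℝ) : ℝ := -Real.cos (Real.pi * u)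

noncomputable def phi (b : Bool) (u : ℝ) : ℝ := if b then 1 - u / 2 else u / 2

noncomputable def PP : List Bool → ℝ → ℝ
  | [] => id
  | b :: w => phi b ∘ PP w

lemma phi_mem {b : Bool} {u : ℝ} (hu : u ∈ Icc (0:ℝ) 1) : phi b u ∈ Icc (0:ℝ) 1 := by
  obtain ⟨h1, h2⟩ := hu
  cases b <;> simp only [phi, if_true, if_false, mem_Icc, Bool.false_eq_true] <;>
    constructor <;> linarith

lemma PP_mem {w : List Bool} {u : ℝ} (hu : u ∈ Icc (0:ℝ) 1) : PP w u ∈ Icc (0:ℝ) 1 := by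
  induction w with
  | nil => exact hu
  | cons b w ih => exact phi_mem ih

lemma PP_affine (w : List Bool) : ∀ u : ℝ, PP w u = PP w 0 + (PP w 1 - PP w 0) * u := by
  induction w with
  | nil => intro u; simp [PP]
  | cons b w ih =>
    intro u
    show phi b (PP w u) = phi b (PP w 0) + (phi b (PP w 1) - phi b (PP w 0)) * u
    rw [ih u]
    cases b <;> simp only [phi, if_true, if_false, Bool.false_eq_true] <;> ring

lemma PP_width (w : List Bool) : |PP w 1 - PP w 0| = (1/2 : ℝ) ^ w.length := by
  induction w with
  | nil => simp [PP]
  | cons b w ih =>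
    have h : PP (b :: w) 1 - PP (b :: w) 0
        = (if b then -(1:ℝ)/2 else 1/2) * (PP w 1 - PP w 0) := by
      show phi b (PP w 1) - phi b (PP w 0) = _
      cases b <;> simp only [phi, if_true, if_false, Bool.false_eq_true] <;> ring
    rw [h, abs_mul, ih, List.length_cons, pow_succ]
    have h2 : |(-1/2 : ℝ)| = 1/2 := by rw [abs_of_nonpos (by norm_num)]; norm_num
    have h3 : |(1/2 : ℝ)| = 1/2 := abs_of_nonneg (by norm_num)
    cases b <;> simp only [Bool.false_eq_true, if_true, if_false, h2, h3] <;> ring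

lemma PP_avg (w : List Bool) (x y : ℝ) : PP w ((x + y) / 2) = (PP w x + PP w y) / 2 := by
  rw [PP_affine w ((x+y)/2), PP_affine w x, PP_affine w y]; ring

lemma PP_append (w : List Bool) (b : Bool) : PP (w ++ [b]) = PP w ∘ phi b := by
  induction w with
  | nil => rfl
  | cons c w ih => show phi c ∘ PP (w ++ [b]) = _; rw [ih]; rfl


open Real

lemma q_strictMonoOn : StrictMonoOn q (Icc (-1:ℝ) 0) := by
  intro x hx y hy hxy
  simp only [q]
  have hx2 := hx.2; have hy1 := hy.1; have hy2 := hy.2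
  nlinarith

lemma q_strictAntiOn : StrictAntiOn q (Icc (0:ℝ) 1) := by
  intro x hx y hy hxy
  simp only [q]
  have hx1 := hx.1
  nlinarith

lemma hh_zero : hh 0 = -1 := by simp [hh]

lemma hh_one : hh 1 = 1 := by simp [hh]

lemma q_hh (v : ℝ) : q (hh v) = hh (2 * v) := by
  have h : Real.cos (π * (2 * v)) = 2 * Real.cos (π * v) ^ 2 - 1 := by
    rw [show π * (2 * v) = 2 * (π * v) by ring, Real.cos_two_mul]
  simp only [q, hh, h]; ring

lemma hh_mono : MonotoneOn hh (Icc (0:ℝ) 1) := by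
  intro x hx y hy hxy
  simp only [hh, neg_le_neg_iff]
  apply Real.cos_le_cos_of_nonneg_of_le_pi
  · exact mul_nonneg Real.pi_pos.le hx.1
  · calc π * y ≤ π * 1 := mul_le_mul_of_nonneg_left hy.2 Real.pi_pos.le
      _ = π := mul_one π
  · exact mul_le_mul_of_nonneg_left hxy Real.pi_pos.le

lemma hh_cont : Continuous hh := by
  have : Continuous fun u : ℝ => -Real.cos (π * u) := by continuity
  exact this

lemma hh_image {l r : ℝ} (h0 : 0 ≤ l) (hlr : l ≤ r) (h1 : r ≤ 1) :
    hh '' Icc l r = Icc (hh l) (hh r) := by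
  apply Subset.antisymm
  · rintro x ⟨u, hu, rfl⟩
    exact ⟨hh_mono ⟨h0, by linarith [hu.2]⟩ ⟨by linarith [hu.1], by linarith [hu.2]⟩ hu.1,
      hh_mono ⟨by linarith [hu.1], by linarith [hu.2]⟩ ⟨by linarith, h1⟩ hu.2⟩
  · exact intermediate_value_Icc hlr hh_cont.continuousOn

lemma Icc_eq_hh_image : Icc (-1:ℝ) 1 = hh '' Icc 0 1 := by
  rw [hh_image le_rfl zero_le_one le_rfl, hh_zero, hh_one]

lemma branch_hh (b : Bool) {u : ℝ} (hu : u ∈ Icc (0:ℝ) 1) :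
    branch q b (hh u) = hh (phi b u) := by
  cases b
  · -- false branch
    have hmem : hh (u / 2) ∈ Icc (-1:ℝ) 0 := by
      constructor
      · simp only [hh]; nlinarith [Real.cos_le_one (π * (u/2))]
      · simp only [hh, neg_nonpos]
        apply Real.cos_nonneg_of_mem_Icc
        constructor
        · nlinarith [Real.pi_pos, hu.1, hu.2]
        · nlinarith [Real.pi_pos, hu.1, hu.2]
    have hq : q (hh (u / 2)) = hh u := by rw [q_hh, show 2 * (u/2) = u by ring]
    show Function.invFunOn q (Icc (-1) 0) (hh u) = hh (phi false u)
    have : Function.invFunOn q (Icc (-1) 0) (q (hh (u/2))) = hh (u/2) :=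
      q_strictMonoOn.injOn.leftInvOn_invFunOn hmem
    rw [hq] at this
    rw [this]
    simp [phi]
  · -- true branch
    have hmem : hh (1 - u / 2) ∈ Icc (0:ℝ) 1 := by
      constructor
      · simp only [hh, neg_nonneg]
        apply Real.cos_nonpos_of_pi_div_two_le_of_le
        · nlinarith [Real.pi_pos, hu.2]
        · nlinarith [Real.pi_pos, hu.1]
      · simp only [hh]; nlinarith [Real.neg_one_le_cos (π * (1 - u/2))]
    have hq : q (hh (1 - u / 2)) = hh u := by
      rw [q_hh]
      show -Real.cos (π * (2 * (1 - u/2))) = -Real.cos (π * u)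
      rw [show π * (2 * (1 - u/2)) = 2 * π - π * u by ring, Real.cos_two_pi_sub]
    show Function.invFunOn q (Icc 0 1) (hh u) = hh (phi true u)
    have : Function.invFunOn q (Icc 0 1) (q (hh (1 - u/2))) = hh (1 - u/2) :=
      q_strictAntiOn.injOn.leftInvOn_invFunOn hmem
    rw [hq] at this
    rw [this]
    simp [phi]

lemma gw_hh (w : List Bool) {u : ℝ} (hu : u ∈ Icc (0:ℝ) 1) :
    gw q w (hh u) = hh (PP w u) := by
  induction w with
  | nil => rfl
  | cons b w ih =>
    show branch q b (gw q w (hh u)) = hh (PP (b :: w) u)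
    rw [ih, branch_hh b (PP_mem hu)]
    rfl

lemma Iw_eq (w : List Bool) : Iw q w = hh '' (PP w '' Icc 0 1) := by
  rw [Iw, Icc_eq_hh_image, Set.image_image, Set.image_image]
  exact Set.image_congr fun u hu => gw_hh w hu


lemma phi_cont (b : Bool) : Continuous (phi b) := by
  cases b
  · have : Continuous fun u : ℝ => u / 2 := by continuity
    exact this.congr fun u => by simp [phi]
  · have : Continuous fun u : ℝ => 1 - u / 2 := by continuity
    exact this.congr fun u => by simp [phi]

lemma PP_cont (w : List Bool) : Continuous (PP w) := by
  induction w with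
  | nil => exact continuous_id
  | cons b w ih => exact (phi_cont b).comp ih

lemma PP_image (w : List Bool) :
    PP w '' Icc 0 1 = Icc (min (PP w 0) (PP w 1)) (max (PP w 0) (PP w 1)) := by
  have haff := PP_affine w
  rcases le_total (PP w 0) (PP w 1) with h | h
  · rw [min_eq_left h, max_eq_right h]
    apply Subset.antisymm
    · rintro x ⟨u, hu, rfl⟩
      rw [haff u]
      constructor <;> nlinarith [hu.1, hu.2]
    · exact intermediate_value_Icc zero_le_one (PP_cont w).continuousOn
  · rw [min_eq_right h, max_eq_left h]
    apply Subset.antisymm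
    · rintro x ⟨u, hu, rfl⟩
      rw [haff u]
      constructor <;> nlinarith [hu.1, hu.2]
    · exact intermediate_value_Icc' zero_le_one (PP_cont w).continuousOn

open Real in
lemma len_Iw (w : List Bool) :
    len (Iw q w) = 2 * Real.sin (π * ((PP w 0 + PP w 1) / 2))
      * Real.sin (π * (1/2) ^ (w.length + 1)) := by
  have h00 : (0:ℝ) ∈ Icc (0:ℝ) 1 := ⟨le_rfl, zero_le_one⟩
  have h11 : (1:ℝ) ∈ Icc (0:ℝ) 1 := ⟨zero_le_one, le_rfl⟩
  have he0 := PP_mem (w := w) h00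
  have he1 := PP_mem (w := w) h11
  set e0 := PP w 0
  set e1 := PP w 1
  have hm0 : 0 ≤ min e0 e1 := le_min he0.1 he1.1
  have hM1 : max e0 e1 ≤ 1 := max_le he0.2 he1.2
  have hmono := hh_mono ⟨hm0, le_trans min_le_max hM1⟩
    ⟨le_trans hm0 min_le_max, hM1⟩ min_le_max
  rw [Iw_eq, PP_image, hh_image hm0 min_le_max hM1, len, Real.volume_Icc,
    ENNReal.toReal_ofReal (by linarith)]
  have hsum : min e0 e1 + max e0 e1 = e0 + e1 := min_add_max e0 e1
  have hdiff : max e0 e1 - min e0 e1 = (1/2:ℝ) ^ w.length := by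
    rw [max_sub_min_eq_abs]
    exact PP_width w
  have hc := Real.cos_sub_cos (π * min e0 e1) (π * max e0 e1)
  have h1 : (π * min e0 e1 + π * max e0 e1) / 2 = π * ((e0 + e1) / 2) := by
    rw [show π * min e0 e1 + π * max e0 e1 = π * (min e0 e1 + max e0 e1) by ring, hsum]; ring
  have h2 : (π * min e0 e1 - π * max e0 e1) / 2 = -(π * (1/2) ^ (w.length + 1)) := by
    rw [show π * min e0 e1 - π * max e0 e1 = -(π * (max e0 e1 - min e0 e1)) by ring, hdiff,
      pow_succ]
    ring
  rw [h1, h2, Real.sin_neg] at hc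
  show -Real.cos (π * max e0 e1) - -Real.cos (π * min e0 e1) = _
  linarith [hc]


lemma word_length (a : ℕ → Bool) (n : ℕ) : (word a n).length = n + 1 := by
  simp [word]

lemma word_cons (a : ℕ → Bool) (m : ℕ) : word a (m+1) = a (m+1) :: word a m := by
  simp [word, List.range_succ]

lemma word_concat (a : ℕ → Bool) (m : ℕ) :
    word a (m+1) = word (fun k => a (k+1)) m ++ [a 0] := by
  unfold word
  rw [show m + 1 + 1 = (m+1) + 1 from rfl, List.range_succ_eq_map, List.reverse_cons,
    List.map_append, List.map_reverse, List.map_map, List.map_reverse]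
  rfl

lemma word_dropLast (a : ℕ → Bool) (m : ℕ) :
    (word a (m+1)).dropLast = word (fun k => a (k+1)) m := by
  rw [word_concat, List.dropLast_concat]

noncomputable def ZZ (a : ℕ → Bool) (m : ℕ) : ℝ := PP (word (fun k => a (k+1)) m) (1/2)

noncomputable def UU (a : ℕ → Bool) (m : ℕ) : ℝ :=
  PP (word (fun k => a (k+1)) m) (if a 0 then (3:ℝ)/4 else 1/4)

lemma ZZ_zero (a : ℕ → Bool) : ZZ a 0 = phi (a 1) (1/2) := by
  simp [ZZ, word, PP, List.range_succ]

lemma ZZ_succ (a : ℕ → Bool) (m : ℕ) : ZZ a (m+1) = phi (a (m+2)) (ZZ a m) := by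
  rw [ZZ, word_cons]; rfl

lemma UU_succ (a : ℕ → Bool) (m : ℕ) : UU a (m+1) = phi (a (m+2)) (UU a m) := by
  rw [UU, word_cons]; rfl

lemma ZZ_mem (a : ℕ → Bool) : ∀ m, ZZ a m ∈ Icc ((1/2:ℝ)^(m+2)) (1 - (1/2:ℝ)^(m+2)) := by
  intro m
  induction m with
  | zero =>
    rw [ZZ_zero]
    cases a 1 <;> simp only [phi, if_true, if_false, Bool.false_eq_true] <;>
      constructor <;> norm_num
  | succ m ih =>
    rw [ZZ_succ]
    have h2 : (1/2:ℝ)^(m+1+2) = (1/2)^(m+2)/2 := by rw [pow_succ]; ring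
    obtain ⟨ih1, ih2⟩ := ih
    cases a (m+2) <;> simp only [phi, if_true, if_false, Bool.false_eq_true] <;>
      rw [h2] <;> constructor <;> linarith

lemma ZZ_pos (a : ℕ → Bool) (m : ℕ) : 0 < ZZ a m :=
  lt_of_lt_of_le (by positivity) (ZZ_mem a m).1

lemma ZZ_lt_one (a : ℕ → Bool) (m : ℕ) : ZZ a m < 1 := by
  have h := (ZZ_mem a m).2
  have : (0:ℝ) < (1/2)^(m+2) := by positivity
  linarith

lemma ZZ_le_one (a : ℕ → Bool) (m : ℕ) : ZZ a m ≤ 1 := (ZZ_lt_one a m).le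

lemma UU_mem (a : ℕ → Bool) (m : ℕ) : UU a m ∈ Icc (0:ℝ) 1 := by
  apply PP_mem
  cases a 0 <;> simp only [if_true, if_false, Bool.false_eq_true] <;> constructor <;> norm_num

lemma UU_sub_ZZ (a : ℕ → Bool) (m : ℕ) : |UU a m - ZZ a m| = (1/2:ℝ)^(m+3) := by
  set v := word (fun k => a (k+1)) m with hv
  have h : UU a m - ZZ a m
      = (PP v 1 - PP v 0) * ((if a 0 then (3:ℝ)/4 else 1/4) - 1/2) := by
    rw [UU, ZZ, PP_affine v (if a 0 then (3:ℝ)/4 else 1/4), PP_affine v (1/2)]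
    ring
  rw [h, abs_mul, PP_width, word_length]
  have h4 : |(if a 0 then (3:ℝ)/4 else 1/4) - 1/2| = 1/4 := by
    cases a 0
    · rw [if_neg (by simp), show (1/4 : ℝ) - 1/2 = -(1/4) by norm_num, abs_neg,
        abs_of_nonneg (by norm_num)]
    · rw [if_pos rfl, show (3/4 : ℝ) - 1/2 = 1/4 by norm_num, abs_of_nonneg (by norm_num)]
  rw [h4, show m + 3 = (m+1) + 2 from rfl, pow_add]
  ring

lemma mid_eq_ZZ (a : ℕ → Bool) (m : ℕ) :
    (PP (word (fun k => a (k+1)) m) 0 + PP (word (fun k => a (k+1)) m) 1) / 2 = ZZ a m := by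
  rw [ZZ, show (1:ℝ)/2 = (0 + 1)/2 by norm_num, PP_avg]

lemma mid_eq_UU (a : ℕ → Bool) (m : ℕ) :
    (PP (word (fun k => a (k+1)) m ++ [a 0]) 0 + PP (word (fun k => a (k+1)) m ++ [a 0]) 1) / 2
      = UU a m := by
  rw [PP_append, UU]
  show (PP _ (phi (a 0) 0) + PP _ (phi (a 0) 1)) / 2 = _
  rw [← PP_avg]
  congr 1
  cases a 0 <;> simp only [phi, if_true, if_false, Bool.false_eq_true] <;> norm_num

open Real in
lemma ratio_eq (a : ℕ → Bool) (m : ℕ) :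
    ratio q a (m+1) =
      (2 * Real.sin (π * UU a m) * Real.sin (π * (1/2:ℝ)^(m+3)))
        / (2 * Real.sin (π * ZZ a m) * Real.sin (π * (1/2:ℝ)^(m+2))) := by
  rw [ratio, word_dropLast, word_concat, len_Iw, len_Iw, mid_eq_UU, mid_eq_ZZ]
  have h1 : (word (fun k => a (k+1)) m ++ [a 0]).length + 1 = m + 3 := by
    rw [List.length_append, word_length]; rfl
  have h2 : (word (fun k => a (k+1)) m).length + 1 = m + 2 := by rw [word_length]
  rw [h1, h2]


open Real

lemma abs_sin_le_abs' (t : ℝ) : |Real.sin t| ≤ |t| := by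
  have key : ∀ s : ℝ, 0 ≤ s → |Real.sin s| ≤ s := by
    intro s hs
    rw [abs_le]
    constructor
    · rcases le_total s π with h | h
      · have := Real.sin_nonneg_of_nonneg_of_le_pi hs h
        linarith
      · have := Real.neg_one_le_sin s
        have := Real.pi_gt_three
        linarith
    · exact Real.sin_le hs
  rcases le_total 0 t with h | h
  · rw [abs_of_nonneg h]; exact key t h
  · rw [abs_of_nonpos h]
    have := key (-t) (by linarith)
    rwa [Real.sin_neg, abs_neg] at this

lemma sin_lip (x y : ℝ) : |Real.sin x - Real.sin y| ≤ |x - y| := by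
  rw [Real.sin_sub_sin, abs_mul, abs_mul]
  have h1 : |Real.sin ((x - y) / 2)| ≤ |(x - y) / 2| := abs_sin_le_abs' _
  have h2 : |Real.cos ((x + y) / 2)| ≤ 1 := Real.abs_cos_le_one _
  have h3 : |(2:ℝ)| = 2 := by norm_num
  calc |(2:ℝ)| * |Real.sin ((x - y) / 2)| * |Real.cos ((x + y) / 2)|
      ≤ |(2:ℝ)| * |(x - y) / 2| * 1 := by
        apply mul_le_mul (mul_le_mul le_rfl h1 (abs_nonneg _) (abs_nonneg _)) h2
          (abs_nonneg _) (by positivity)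
    _ = |x - y| := by rw [h3, abs_div]; norm_num; ring

lemma two_min_le_sin {z : ℝ} (h0 : 0 ≤ z) (h1 : z ≤ 1) :
    2 * min z (1 - z) ≤ Real.sin (π * z) := by
  have hmin0 : 0 ≤ min z (1 - z) := le_min h0 (by linarith)
  have hminh : min z (1 - z) ≤ 1/2 := by
    rcases le_total z (1 - z) with h | h
    · rw [min_eq_left h]; linarith
    · rw [min_eq_right h]; linarith
  have hs : Real.sin (π * z) = Real.sin (π * min z (1 - z)) := by
    rcases le_total z (1 - z) with h | h
    · rw [min_eq_left h]
    · rw [min_eq_right h, show π * (1 - z) = π - π * z by ring, Real.sin_pi_sub]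
  rw [hs]
  have := Real.mul_le_sin (x := π * min z (1 - z))
    (by positivity) (by nlinarith [Real.pi_pos])
  calc 2 * min z (1 - z) = 2 / π * (π * min z (1 - z)) := by
        field_simp
    _ ≤ Real.sin (π * min z (1 - z)) := this

lemma sin_ZZ_pos (a : ℕ → Bool) (m : ℕ) : 0 < Real.sin (π * ZZ a m) :=
  Real.sin_pos_of_pos_of_lt_pi (by nlinarith [ZZ_pos a m, Real.pi_pos])
    (by nlinarith [ZZ_lt_one a m, Real.pi_pos])

lemma sin_ZZ_lb (a : ℕ → Bool) (m : ℕ) :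
    2 * min (ZZ a m) (1 - ZZ a m) ≤ Real.sin (π * ZZ a m) :=
  two_min_le_sin (ZZ_pos a m).le (ZZ_le_one a m)

-- lower bound after a "true" symbol
lemma ZZ_half {a : ℕ → Bool} {p : ℕ} (hp : a (p+1) = true) : 1/2 ≤ ZZ a p := by
  cases p with
  | zero =>
    rw [ZZ_zero, hp]
    simp only [phi, if_true]
    norm_num
  | succ m =>
    rw [ZZ_succ, show m + 2 = m + 1 + 1 from rfl, hp]
    simp only [phi, if_true]
    have := ZZ_le_one a m
    linarith

lemma ZZ_low {a : ℕ → Bool} {p : ℕ} (hp : a (p+1) = true) :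
    ∀ m, p ≤ m → (1/2:ℝ)^(m - p) / 2 ≤ ZZ a m := by
  intro m hm
  induction m, hm using Nat.le_induction with
  | base => simpa using ZZ_half hp
  | succ m hm ih =>
    have hsub : m + 1 - p = (m - p) + 1 := by omega
    rw [ZZ_succ, hsub, pow_succ]
    have hZ1 := ZZ_le_one a m
    cases hA : a (m + 2)
    · simp only [phi, Bool.false_eq_true, if_false]
      linarith
    · simp only [phi, if_true]
      have : (1/2:ℝ)^(m - p) ≤ 1 := pow_le_one₀ (by norm_num) (by norm_num)
      linarith

lemma ZZ_min_low {a : ℕ → Bool} {p s : ℕ} (hp : a (p+1) = true) (hs : a (s+2) = true)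
    (hps : p ≤ s) :
    ∀ m, s + 1 ≤ m → (1/2:ℝ)^(m - p) / 8 ≤ min (ZZ a m) (1 - ZZ a m) := by
  intro m hm
  have hpow1 : ∀ k : ℕ, (1/2:ℝ)^k ≤ 1 := fun k => pow_le_one₀ (by norm_num) (by norm_num)
  have hpow0 : ∀ k : ℕ, (0:ℝ) ≤ (1/2:ℝ)^k := fun k => by positivity
  induction m, hm using Nat.le_induction with
  | base =>
    have hlow := ZZ_low hp s hps
    have hZle := ZZ_le_one a s
    have hp1 := hpow1 (s - p)
    have hx0 := hpow0 (s - p)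
    rw [ZZ_succ, hs]
    simp only [phi, if_true]
    have hsub : s + 1 - p = (s - p) + 1 := by omega
    rw [hsub, pow_succ]
    apply le_min
    · linarith
    · linarith
  | succ m hm ih =>
    obtain ⟨ih1, ih2⟩ := le_min_iff.mp ih
    have hZ1 := ZZ_le_one a m
    have hp1 := hpow1 (m - p)
    have hx0 := hpow0 (m - p)
    have hsub : m + 1 - p = (m - p) + 1 := by omega
    rw [ZZ_succ, hsub, pow_succ]
    cases hA : a (m + 2)
    · simp only [phi, Bool.false_eq_true, if_false]
      apply le_min
      · linarith
      · linarith
    · simp only [phi, if_true]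
      apply le_min
      · linarith
      · linarith


open Real

lemma tendsto_sinc (c : ℝ) :
    Tendsto (fun t : ℝ => Real.sin (c * t) / t) (𝓝[≠] (0:ℝ)) (𝓝 c) := by
  have h1 : HasDerivAt (fun t : ℝ => c * t) c 0 := by
    simpa using (hasDerivAt_id (0:ℝ)).const_mul c
  have h2 : HasDerivAt (fun t : ℝ => Real.sin (c * t)) c 0 := by
    have := (Real.hasDerivAt_sin (c * 0)).comp 0 h1
    rw [mul_zero, Real.cos_zero, one_mul] at this
    exact this
  rw [hasDerivAt_iff_tendsto_slope] at h2
  refine Tendsto.congr' ?_ h2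
  filter_upwards [self_mem_nhdsWithin] with t ht
  rw [slope_def_field]
  simp

lemma tendsto_sinc_div (c d : ℝ) (hd : d ≠ 0) :
    Tendsto (fun t : ℝ => Real.sin (c * t) / Real.sin (d * t)) (𝓝[≠] (0:ℝ)) (𝓝 (c / d)) := by
  have h := (tendsto_sinc c).div (tendsto_sinc d) hd
  refine Tendsto.congr' ?_ h
  filter_upwards [self_mem_nhdsWithin] with t ht
  have ht' : t ≠ 0 := ht
  simp only [Pi.div_apply]
  field_simp

lemma tendsto_quotient (c1 c2 d1 d2 : ℝ) (hd1 : d1 ≠ 0) (hd2 : d2 ≠ 0) :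
    Tendsto (fun t : ℝ => (Real.sin (c1 * t) * Real.sin (c2 * t)) /
      (Real.sin (d1 * t) * Real.sin (d2 * t))) (𝓝[≠] (0:ℝ))
      (𝓝 ((c1 * c2) / (d1 * d2))) := by
  have h := ((tendsto_sinc c1).mul (tendsto_sinc c2)).div
    ((tendsto_sinc d1).mul (tendsto_sinc d2)) (mul_ne_zero hd1 hd2)
  refine Tendsto.congr' ?_ h
  filter_upwards [self_mem_nhdsWithin] with t ht
  have ht' : t ≠ 0 := ht
  simp only [Pi.div_apply]
  field_simp

lemma tendsto_pow_sub (N : ℕ) :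
    Tendsto (fun m : ℕ => (1/2:ℝ)^(m - N)) atTop (𝓝[≠] (0:ℝ)) := by
  rw [tendsto_nhdsWithin_iff]
  constructor
  · exact (tendsto_pow_atTop_nhds_zero_of_lt_one (by norm_num) (by norm_num)).comp
      (tendsto_sub_atTop_nat N)
  · exact Eventually.of_forall fun m => by
      simp only [mem_compl_iff, mem_singleton_iff]
      positivity

lemma tendsto_pow_id :
    Tendsto (fun m : ℕ => (1/2:ℝ)^m) atTop (𝓝[≠] (0:ℝ)) := by
  have := tendsto_pow_sub 0
  simpa using this


open Real

lemma tendsto_ratio_evZero {a : ℕ → Bool} (h : EvZero a) :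
    ∃ L : ℝ, Tendsto (ratio q a) atTop (𝓝 L) ∧ L ≠ 1/2 := by
  obtain ⟨N, hN⟩ := h
  have hb : ∀ k, N ≤ k → a (k + 1) = false := fun k hk => hN (k+1) (by omega)
  -- decay of ZZ and UU
  have hZdec : ∀ m, N ≤ m → ZZ a m = ZZ a N * (1/2:ℝ)^(m - N) := by
    intro m hm
    induction m, hm using Nat.le_induction with
    | base => simp
    | succ m hm ih =>
      rw [ZZ_succ, show m + 2 = (m+1) + 1 from rfl, hb (m+1) (by omega)]
      simp only [phi, Bool.false_eq_true, if_false]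
      rw [ih, show m + 1 - N = (m - N) + 1 by omega, pow_succ]
      ring
  have hUdec : ∀ m, N ≤ m → UU a m = UU a N * (1/2:ℝ)^(m - N) := by
    intro m hm
    induction m, hm using Nat.le_induction with
    | base => simp
    | succ m hm ih =>
      rw [UU_succ, show m + 2 = (m+1) + 1 from rfl, hb (m+1) (by omega)]
      simp only [phi, Bool.false_eq_true, if_false]
      rw [ih, show m + 1 - N = (m - N) + 1 by omega, pow_succ]
      ring
  set c1 := π * UU a N with hc1
  set c2 := π * (1/2:ℝ)^(N+3) with hc2
  set d1 := π * ZZ a N with hd1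
  set d2 := π * (1/2:ℝ)^(N+2) with hd2
  have hd1ne : d1 ≠ 0 := by
    have := ZZ_pos a N
    have := Real.pi_pos
    positivity
  have hd2ne : d2 ≠ 0 := by
    have := Real.pi_pos
    positivity
  refine ⟨(c1 * c2) / (d1 * d2), ?_, ?_⟩
  · rw [← tendsto_add_atTop_iff_nat 1]
    have hcomp := (tendsto_quotient c1 c2 d1 d2 hd1ne hd2ne).comp (tendsto_pow_sub N)
    refine Tendsto.congr' ?_ hcomp
    rw [EventuallyEq, eventually_atTop]
    refine ⟨N, fun m hm => ?_⟩
    have ht : (0:ℝ) < (1/2:ℝ)^(m - N) := by positivity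
    have e2 : (1/2:ℝ)^(m+3) = (1/2)^(N+3) * (1/2)^(m - N) := by
      rw [← pow_add, show N + 3 + (m - N) = m + 3 by omega]
    have e3 : (1/2:ℝ)^(m+2) = (1/2)^(N+2) * (1/2)^(m - N) := by
      rw [← pow_add, show N + 2 + (m - N) = m + 2 by omega]
    show (Real.sin (c1 * _) * Real.sin (c2 * _)) / (Real.sin (d1 * _) * Real.sin (d2 * _))
      = ratio q a (m + 1)
    rw [ratio_eq, hZdec m hm, hUdec m hm, e2, e3]
    rw [show 2 * Real.sin (π * (UU a N * (1/2:ℝ)^(m-N)))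
          * Real.sin (π * ((1/2:ℝ)^(N+3) * (1/2)^(m-N)))
        = 2 * (Real.sin (c1 * (1/2:ℝ)^(m-N)) * Real.sin (c2 * (1/2:ℝ)^(m-N))) by
      rw [hc1, hc2]; ring_nf]
    rw [show 2 * Real.sin (π * (ZZ a N * (1/2:ℝ)^(m-N)))
          * Real.sin (π * ((1/2:ℝ)^(N+2) * (1/2)^(m-N)))
        = 2 * (Real.sin (d1 * (1/2:ℝ)^(m-N)) * Real.sin (d2 * (1/2:ℝ)^(m-N))) by
      rw [hd1, hd2]; ring_nf]
    rw [mul_div_mul_left _ _ (two_ne_zero)]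
  · -- the limit differs from 1/2
    have hUZ : |UU a N - ZZ a N| = (1/2:ℝ)^(N+3) := UU_sub_ZZ a N
    have hne : UU a N ≠ ZZ a N := by
      intro he
      rw [he, sub_self, abs_zero] at hUZ
      have : (0:ℝ) < (1/2:ℝ)^(N+3) := by positivity
      linarith
    have hZpos := ZZ_pos a N
    have hpi := Real.pi_pos
    have hval : (c1 * c2) / (d1 * d2) = UU a N / (2 * ZZ a N) := by
      rw [hc1, hc2, hd1, hd2, show N + 3 = (N+2)+1 from rfl, pow_succ]
      have hp2 : ((1:ℝ)/2)^(N+2) ≠ 0 := by positivity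
      field_simp
    rw [hval]
    intro hcon
    rw [div_eq_div_iff (by linarith) (by norm_num)] at hcon
    apply hne
    linarith


open Real

lemma tendsto_ratio_notEvZero {a : ℕ → Bool} (h : ¬ EvZero a) :
    Tendsto (ratio q a) atTop (𝓝 (1/2)) := by
  have htrue : ∀ K : ℕ, ∃ k, K ≤ k ∧ a (k + 1) = true := by
    intro K
    by_contra hc
    push_neg at hc
    exact h ⟨K + 1, fun n hn => by
      have := hc (n - 1) (by omega)
      have hn1 : n - 1 + 1 = n := by omega
      rw [hn1] at this
      exact Bool.not_eq_true _ |>.mp this⟩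
  -- factor A tends to 1
  have hA : Tendsto (fun m => Real.sin (π * UU a m) / Real.sin (π * ZZ a m)) atTop (𝓝 1) := by
    rw [Metric.tendsto_atTop]
    intro ε hε
    obtain ⟨p', hp'⟩ : ∃ p' : ℕ, (1/2:ℝ)^p' < ε / 4 := by
      obtain ⟨n, hn⟩ := exists_pow_lt_of_lt_one (by positivity : (0:ℝ) < ε / 4)
        (by norm_num : (1/2:ℝ) < 1)
      exact ⟨n, hn⟩
    obtain ⟨p, hpge, hptrue⟩ := htrue p'
    obtain ⟨s, hsge, hstrue⟩ := htrue (p + 1)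
    have hs1 : s - 1 + 2 = s + 1 := by omega
    have hstrue' : a ((s-1) + 2) = true := by rw [hs1]; exact hstrue
    have hps : p ≤ s - 1 := by omega
    refine ⟨s, fun m hm => ?_⟩
    have hmin := ZZ_min_low hptrue hstrue' hps m (by omega)
    have hsinZ := sin_ZZ_pos a m
    have hsinlb : (1/2:ℝ)^(m-p)/4 ≤ Real.sin (π * ZZ a m) := by
      have := sin_ZZ_lb a m
      have h2 := le_min_iff.mp hmin
      linarith [h2.1, h2.2, min_le_left (ZZ a m) (1 - ZZ a m)]
    have hnum : |Real.sin (π * UU a m) - Real.sin (π * ZZ a m)| ≤ π * (1/2:ℝ)^(m+3) := by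
      have := sin_lip (π * UU a m) (π * ZZ a m)
      have he : |π * UU a m - π * ZZ a m| = π * (1/2:ℝ)^(m+3) := by
        rw [show π * UU a m - π * ZZ a m = π * (UU a m - ZZ a m) by ring, abs_mul,
          abs_of_pos Real.pi_pos, UU_sub_ZZ]
      linarith [this, he.le]
    rw [Real.dist_eq, div_sub_one hsinZ.ne', abs_div, abs_of_pos hsinZ]
    have hstep : |Real.sin (π * UU a m) - Real.sin (π * ZZ a m)| / Real.sin (π * ZZ a m)
        ≤ (π * (1/2:ℝ)^(m+3)) / ((1/2:ℝ)^(m-p)/4) := by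
      apply div_le_div₀ (by positivity) hnum (by positivity) hsinlb
    have hq : (π * (1/2:ℝ)^(m+3)) / ((1/2:ℝ)^(m-p)/4) = 4 * π * (1/2:ℝ)^(p+3) := by
      rw [show (1/2:ℝ)^(m+3) = (1/2:ℝ)^(m-p) * (1/2:ℝ)^(p+3) by
        rw [← pow_add, show m - p + (p + 3) = m + 3 by omega]]
      have : ((1:ℝ)/2)^(m-p) ≠ 0 := by positivity
      field_simp
    have hfin : 4 * π * (1/2:ℝ)^(p+3) < ε := by
      have h1 : (1/2:ℝ)^(p+3) ≤ (1/2:ℝ)^p * (1/8) := by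
        rw [pow_add]; norm_num
      have h2 : (1/2:ℝ)^p ≤ (1/2:ℝ)^p' :=
        pow_le_pow_of_le_one (by norm_num) (by norm_num) hpge
      nlinarith [Real.pi_lt_d2, Real.pi_pos, pow_pos (by norm_num : (0:ℝ) < 1/2) p]
    calc |Real.sin (π * UU a m) - Real.sin (π * ZZ a m)| / Real.sin (π * ZZ a m)
        ≤ (π * (1/2:ℝ)^(m+3)) / ((1/2:ℝ)^(m-p)/4) := hstep
      _ = 4 * π * (1/2:ℝ)^(p+3) := hq
      _ < ε := hfin
  -- factor B tends to 1/2
  have hB : Tendsto (fun m => Real.sin (π * (1/2:ℝ)^(m+3)) / Real.sin (π * (1/2:ℝ)^(m+2)))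
      atTop (𝓝 (1/2)) := by
    have hcomp := (tendsto_sinc_div (π * (1/2:ℝ)^3) (π * (1/2:ℝ)^2)
      (by have := Real.pi_pos; positivity)).comp tendsto_pow_id
    have hval : (π * (1/2:ℝ)^3) / (π * (1/2:ℝ)^2) = 1/2 := by
      have := Real.pi_pos
      field_simp
    rw [hval] at hcomp
    refine Tendsto.congr' ?_ hcomp
    rw [EventuallyEq, eventually_atTop]
    refine ⟨0, fun m _ => ?_⟩
    show Real.sin (π * (1/2:ℝ)^3 * (1/2:ℝ)^m) / Real.sin (π * (1/2:ℝ)^2 * (1/2:ℝ)^m) = _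
    rw [show π * (1/2:ℝ)^3 * (1/2:ℝ)^m = π * (1/2:ℝ)^(m+3) by
        rw [pow_add]; ring,
      show π * (1/2:ℝ)^2 * (1/2:ℝ)^m = π * (1/2:ℝ)^(m+2) by
        rw [pow_add]; ring]
  -- assemble
  rw [← tendsto_add_atTop_iff_nat 1]
  have hAB := hA.mul hB
  rw [show (1:ℝ) * (1/2) = 1/2 by norm_num] at hAB
  refine Tendsto.congr' ?_ hAB
  rw [EventuallyEq, eventually_atTop]
  refine ⟨0, fun m _ => ?_⟩
  rw [ratio_eq]
  rw [show 2 * Real.sin (π * UU a m) * Real.sin (π * (1/2:ℝ)^(m+3))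
      = 2 * (Real.sin (π * UU a m) * Real.sin (π * (1/2:ℝ)^(m+3))) by ring]
  rw [show 2 * Real.sin (π * ZZ a m) * Real.sin (π * (1/2:ℝ)^(m+2))
      = 2 * (Real.sin (π * ZZ a m) * Real.sin (π * (1/2:ℝ)^(m+2))) by ring]
  rw [mul_div_mul_left _ _ (two_ne_zero), div_mul_div_comm]


/-- Proposition 2: the scaling function `s_q` of `q(x) = 1 - 2x²` exists on
the dual Cantor set, equals `1/2` at every point of `ℬ`, and differs from `1/2` at every
point of `𝒜`. -/
theorem scaling_function_of_ulam_von_neumann :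
    ∃ s : (ℕ → Bool) → ℝ, IsScalingFun q s ∧
      (∀ a : ℕ → Bool, ¬ EvZero a → s a = 1 / 2) ∧
      (∀ a : ℕ → Bool, EvZero a → s a ≠ 1 / 2) := by
  have key : ∀ a : ℕ → Bool, ∃ L : ℝ, Tendsto (ratio q a) atTop (𝓝 L) ∧
      (¬ EvZero a → L = 1/2) ∧ (EvZero a → L ≠ 1/2) := by
    intro a
    by_cases h : EvZero a
    · obtain ⟨L, hL, hLne⟩ := tendsto_ratio_evZero h
      exact ⟨L, hL, fun hc => absurd h hc, fun _ => hLne⟩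
    · exact ⟨1/2, tendsto_ratio_notEvZero h, fun _ => rfl, fun hc => absurd hc h⟩
  refine ⟨fun a => limUnder atTop (ratio q a), ?_, ?_, ?_⟩
  · intro a
    obtain ⟨L, hL, _, _⟩ := key a
    show Tendsto (ratio q a) atTop (𝓝 (limUnder atTop (ratio q a)))
    rw [hL.limUnder_eq]
    exact hL
  · intro a ha
    obtain ⟨L, hL, h1, _⟩ := key a
    show limUnder atTop (ratio q a) = 1 / 2
    rw [hL.limUnder_eq]
    exact h1 ha
  · intro a ha
    obtain ⟨L, hL, _, h2⟩ := key a
    show limUnder atTop (ratio q a) ≠ 1 / 2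
    rw [hL.limUnder_eq]
    exact h2 ha
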